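/- arXiv:1904.04944 — 2 statements merged into one kernel-verified Lean document; each statement's English description precedes it below -/
import Mathlib

section
/- Let f ∈ S be a polynomial homogeneous with respect to the modular grading. Then f lies in the ideal R(d) = (g_0,...,g_{n_1+n_2}) if and only if the polynomial (f / remd(f))^{1/d}, obtained by dividing f by remd(f) and then replacing each x_i^{d_1} by x_i and y_j^{d_2} by y_j, lies in the ideal R(1) generated by the elements G_t = Σ_{i+j=t} x_i y_j. -/
open MvPolynomial

def varMod (n₁ n₂ d₁ d₂ : ℕ) : (Fin (n₁ + 1) ⊕ Fin (n₂ + 1)) → ℕ :=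
  Sum.elim (fun _ => d₁) (fun _ => d₂)

noncomputable def gElt (K : Type*) [Field K] (n₁ n₂ d₁ d₂ t : ℕ) :
    MvPolynomial (Fin (n₁ + 1) ⊕ Fin (n₂ + 1)) K :=
  ∑ i : Fin (n₁ + 1), ∑ j : Fin (n₂ + 1),
    if (i : ℕ) + (j : ℕ) = t then X (Sum.inl i) ^ d₁ * X (Sum.inr j) ^ d₂ else 0

noncomputable def RIdeal (K : Type*) [Field K] (n₁ n₂ d₁ d₂ : ℕ) :
    Ideal (MvPolynomial (Fin (n₁ + 1) ⊕ Fin (n₂ + 1)) K) :=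
  Ideal.span (Set.range fun t : Fin (n₁ + n₂ + 1) => gElt K n₁ n₂ d₁ d₂ (t : ℕ))


open scoped Classical

section Pi
variable {K : Type*} [CommSemiring K] {σ : Type*} (d : σ → ℕ) (r : σ →₀ ℕ)

/-- componentwise (a - r)/d -/
noncomputable def quotExp (a : σ →₀ ℕ) : σ →₀ ℕ :=
  Finsupp.onFinset a.support (fun i => (a i - r i) / d i) (by
    intro i hi
    rw [Finsupp.mem_support_iff]
    intro h0
    apply hi
    show (a i - r i) / d i = 0
    rw [h0]
    simp)

@[simp] lemma quotExp_apply (a : σ →₀ ℕ) (i : σ) : quotExp d r a i = (a i - r i) / d i := rfl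

noncomputable def piMap : MvPolynomial σ K →ₗ[K] MvPolynomial σ K :=
  (Finsupp.lsum K fun a => if ∀ i, a i % d i = r i then (monomial (quotExp d r a) :
    K →ₗ[K] MvPolynomial σ K) else 0) ∘ₗ (AddMonoidAlgebra.coeffLinearEquiv K).toLinearMap

lemma piMap_monomial (a : σ →₀ ℕ) (c : K) :
    piMap d r (monomial a c) =
      if ∀ i, a i % d i = r i then monomial (quotExp d r a) c else 0 := by
  rw [← single_eq_monomial]
  show Finsupp.lsum K _ (Finsupp.single a c) = _
  rw [Finsupp.lsum_single]
  split_ifs <;> simp [single_eq_monomial]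

variable (hd : ∀ i, 1 ≤ d i) (hr : ∀ i, r i < d i)

include hd hr in
lemma piMap_monomial_shift (a : σ →₀ ℕ) (c : K) (i : σ) :
    piMap d r (monomial (a + Finsupp.single i (d i)) c) =
      piMap d r (monomial a c) * X i := by
  rw [piMap_monomial, piMap_monomial]
  have hcond : (∀ j, (a + Finsupp.single i (d i)) j % d j = r j) ↔ ∀ j, a j % d j = r j := by
    apply forall_congr'
    intro j
    rcases eq_or_ne j i with rfl | hne
    · simp [Nat.add_mod_right]
    · simp [Finsupp.single_apply, Ne.symm hne]
  by_cases hc : ∀ j, a j % d j = r j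
  · rw [if_pos (hcond.mpr hc), if_pos hc]
    have hq : quotExp d r (a + Finsupp.single i (d i)) = quotExp d r a + Finsupp.single i 1 := by
      ext j
      rcases eq_or_ne j i with rfl | hne
      · have hle : r j ≤ a j := by
          rw [← hc j]; exact Nat.mod_le _ _
        have h1 : (a + Finsupp.single j (d j)) j = a j + d j := by simp
        have h2 : (quotExp d r a + Finsupp.single j 1 : σ →₀ ℕ) j = (a j - r j) / d j + 1 := by simp
        rw [h2, quotExp_apply, h1, show a j + d j - r j = a j - r j + d j by omega,
          Nat.add_div_right _ (hd j)]
      · simp [Finsupp.single_apply, Ne.symm hne]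
    rw [hq, X, monomial_mul, mul_one]
  · rw [if_neg (fun hh => hc (hcond.mp hh)), if_neg hc, zero_mul]

include hd hr in
lemma piMap_mul_X_pow (p : MvPolynomial σ K) (i : σ) :
    piMap d r (p * X i ^ d i) = piMap d r p * X i := by
  induction p using MvPolynomial.induction_on' with
  | monomial a c =>
    rw [X_pow_eq_monomial, monomial_mul, mul_one, piMap_monomial_shift d r hd hr]
  | add p q hp hq =>
    rw [add_mul, map_add, map_add, hp, hq, add_mul]

include hd hr in
lemma piMap_mul_bind (p q : MvPolynomial σ K) :
    piMap d r (p * bind₁ (fun i => (X i : MvPolynomial σ K) ^ d i) q) =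
      piMap d r p * q := by
  induction q using MvPolynomial.induction_on generalizing p with
  | C a =>
    rw [bind₁_C_right, mul_comm, ← smul_eq_C_mul, map_smul, smul_eq_C_mul, mul_comm]
  | add q₁ q₂ h₁ h₂ =>
    rw [map_add, mul_add, map_add, h₁, h₂, mul_add]
  | mul_X q i hq =>
    have hb : bind₁ (fun i => (X i : MvPolynomial σ K) ^ d i) (q * X i) =
        bind₁ (fun i => (X i : MvPolynomial σ K) ^ d i) q * X i ^ d i := by
      rw [map_mul, bind₁_X_right]
    rw [hb, show p * (bind₁ (fun i => (X i : MvPolynomial σ K) ^ d i) q * X i ^ d i) =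
        (p * X i ^ d i) * bind₁ (fun i => (X i : MvPolynomial σ K) ^ d i) q by ring,
      hq, piMap_mul_X_pow d r hd hr]
    ring

include hd hr in
lemma piMap_bind_mul (h : MvPolynomial σ K) :
    piMap d r (bind₁ (fun i => (X i : MvPolynomial σ K) ^ d i) h * monomial r 1) = h := by
  rw [mul_comm, piMap_mul_bind d r hd hr, piMap_monomial,
    if_pos (fun i => Nat.mod_eq_of_lt (hr i))]
  have : quotExp d r r = 0 := by ext j; simp
  rw [this, monomial_zero', C_1, one_mul]

end Pi

lemma gElt_eq_bind (K : Type*) [Field K] (n₁ n₂ d₁ d₂ t : ℕ) :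
    gElt K n₁ n₂ d₁ d₂ t =
      bind₁ (fun i => (X i : MvPolynomial (Fin (n₁ + 1) ⊕ Fin (n₂ + 1)) K) ^
        varMod n₁ n₂ d₁ d₂ i) (gElt K n₁ n₂ 1 1 t) := by
  simp only [gElt, map_sum, apply_ite, map_zero, map_mul, map_pow, bind₁_X_right, pow_one]
  rfl


/-- Ideal membership for `R(d)` reduces to ideal membership for `R(1)`: a modular-homogeneous
polynomial `f`, written as `f = ψ(h)·x^r` with `r` the common `remd` of its monomials
(`r i < d₁` resp. `d₂` componentwise) and `ψ : x_i ↦ x_i^{d₁}, y_j ↦ y_j^{d₂}` (so that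
`h = (f / remd f)^{1/d}`), lies in `R(d)` if and only if `h` lies in `R(1)`. -/
theorem stmt_9 (K : Type*) [Field K] (n₁ n₂ d₁ d₂ : ℕ)
    (hn₁ : 1 ≤ n₁) (hn₂ : 1 ≤ n₂) (hd₁ : 1 ≤ d₁) (hd₂ : 1 ≤ d₂)
    (h : MvPolynomial (Fin (n₁ + 1) ⊕ Fin (n₂ + 1)) K)
    (r : (Fin (n₁ + 1) ⊕ Fin (n₂ + 1)) →₀ ℕ)
    (hr : ∀ i, r i < varMod n₁ n₂ d₁ d₂ i) :
    (bind₁ (fun i => (X i : MvPolynomial (Fin (n₁ + 1) ⊕ Fin (n₂ + 1)) K) ^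
          varMod n₁ n₂ d₁ d₂ i) h) * monomial r (1 : K) ∈ RIdeal K n₁ n₂ d₁ d₂ ↔
      h ∈ RIdeal K n₁ n₂ 1 1 := by
  have hd : ∀ i, 1 ≤ varMod n₁ n₂ d₁ d₂ i := by
    intro i; cases i <;> simpa [varMod] using (by assumption)
  constructor
  · intro hF
    rw [RIdeal, Ideal.mem_span_range_iff_exists_fun] at hF
    obtain ⟨c, hc⟩ := hF
    have key := congrArg (piMap (varMod n₁ n₂ d₁ d₂) r) hc
    rw [piMap_bind_mul _ r hd hr] at key
    rw [RIdeal, Ideal.mem_span_range_iff_exists_fun]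
    refine ⟨fun t => piMap (varMod n₁ n₂ d₁ d₂) r (c t), ?_⟩
    rw [← key, map_sum]
    refine Finset.sum_congr rfl fun t _ => ?_
    rw [gElt_eq_bind K n₁ n₂ d₁ d₂, piMap_mul_bind _ r hd hr]
  · intro hh
    rw [RIdeal, Ideal.mem_span_range_iff_exists_fun] at hh
    obtain ⟨c, hc⟩ := hh
    refine Ideal.mul_mem_right _ _ ?_
    rw [RIdeal, Ideal.mem_span_range_iff_exists_fun]
    refine ⟨fun t => bind₁ (fun i => (X i : MvPolynomial (Fin (n₁ + 1) ⊕ Fin (n₂ + 1)) K) ^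
      varMod n₁ n₂ d₁ d₂ i) (c t), ?_⟩
    rw [← hc, map_sum]
    refine Finset.sum_congr rfl fun t _ => ?_
    rw [gElt_eq_bind K n₁ n₂ d₁ d₂, map_mul]
end

section
/- Let d = (1,1), n_1,n_2 ≥ 1, and let R(1) = (g_0,...,g_{n_1+n_2}) with g_t = Σ_{i+j=t} x_i y_j. If a = (1, a_2) with a_2 ≥ 1 and k ≤ a_2 − 1, then every monomial of bidegree (1, a_2) and index weighted degree k (weights: x_i has weight i, y_j has weight j) lies in R(1); i.e., the graded piece (S/R(1))_{(1,a_2),k} = 0. -/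
open MvPolynomial

/-- The `x`-degree of a monomial exponent vector. -/
def deg1 (n₁ n₂ : ℕ) (v : (Fin (n₁ + 1) ⊕ Fin (n₂ + 1)) →₀ ℕ) : ℕ :=
  ∑ i : Fin (n₁ + 1), v (Sum.inl i)

/-- The `y`-degree of a monomial exponent vector. -/
def deg2 (n₁ n₂ : ℕ) (v : (Fin (n₁ + 1) ⊕ Fin (n₂ + 1)) →₀ ℕ) : ℕ :=
  ∑ j : Fin (n₂ + 1), v (Sum.inr j)

/-- The index weighted degree in the `d = (1,1)` case: `x_i` has weight `i`, `y_j` weight `j`. -/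
def idxDeg (n₁ n₂ : ℕ) (v : (Fin (n₁ + 1) ⊕ Fin (n₂ + 1)) →₀ ℕ) : ℕ :=
  ∑ i : Fin (n₁ + 1), (i : ℕ) * v (Sum.inl i) + ∑ j : Fin (n₂ + 1), (j : ℕ) * v (Sum.inr j)

private lemma sum_eq_one_nat {n : ℕ} (f : Fin n → ℕ) (h : ∑ i, f i = 1) :
    ∃ i, f i = 1 ∧ ∀ j, j ≠ i → f j = 0 := by
  have hne : ∃ i ∈ Finset.univ, f i ≠ 0 := by
    by_contra hc
    push_neg at hc
    simp [Finset.sum_eq_zero hc] at h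
  obtain ⟨i, -, hi⟩ := hne
  have h1 : f i ≤ 1 := h ▸ Finset.single_le_sum (fun _ _ => Nat.zero_le _) (Finset.mem_univ i)
  have h2 : ∑ j ∈ Finset.univ.erase i, f j = 0 := by
    have := Finset.add_sum_erase Finset.univ f (Finset.mem_univ i)
    omega
  refine ⟨i, by omega, fun j hj => ?_⟩
  exact (Finset.sum_eq_zero_iff.mp h2) j (Finset.mem_erase.mpr ⟨hj, Finset.mem_univ j⟩)

lemma key (K : Type*) [Field K] (n₁ n₂ a₂ : ℕ) :
    ∀ i : ℕ, ∀ hi : i < n₁ + 1, ∀ w : Fin (n₂ + 1) →₀ ℕ,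
      (∑ j, w j = a₂) → i + (∑ j : Fin (n₂ + 1), (j : ℕ) * w j) + 1 ≤ a₂ →
      monomial (Finsupp.single (Sum.inl ⟨i, hi⟩) 1 + w.mapDomain Sum.inr) (1 : K) ∈
        RIdeal K n₁ n₂ 1 1 := by
  intro i
  induction i using Nat.strong_induction_on with
  | _ i IH =>
  intro hi w hsum hwt
  -- w 0 ≥ 1
  have hbound : ∑ j, w j ≤ w 0 + ∑ j : Fin (n₂ + 1), (j : ℕ) * w j := by
    rw [← Finset.add_sum_erase Finset.univ w (Finset.mem_univ 0)]
    gcongr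
    calc ∑ j ∈ Finset.univ.erase (0 : Fin (n₂ + 1)), w j
        ≤ ∑ j ∈ Finset.univ.erase (0 : Fin (n₂ + 1)), (j : ℕ) * w j := by
          refine Finset.sum_le_sum fun j hj => ?_
          have : (j : ℕ) ≠ 0 := by
            exact fun hc => (Finset.mem_erase.mp hj).1 (Fin.val_eq_zero_iff.mp hc)
          exact Nat.le_mul_of_pos_left _ (by omega)
      _ ≤ ∑ j : Fin (n₂ + 1), (j : ℕ) * w j :=
          Finset.sum_le_sum_of_subset (Finset.subset_univ _)
  have hw0 : 1 ≤ w 0 := by omega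
  set w' : Fin (n₂ + 1) →₀ ℕ := w - Finsupp.single 0 1 with hw'
  have hww : w = Finsupp.single 0 1 + w' := by
    ext j
    rw [Finsupp.add_apply, hw', Finsupp.tsub_apply]
    rcases eq_or_ne j 0 with h | h
    · subst h; simp; omega
    · rw [Finsupp.single_eq_of_ne' (Ne.symm h)]; simp [Finsupp.single_eq_of_ne' (Ne.symm h)]
  have hsum_split : ∑ j, w j = 1 + ∑ j, w' j := by
    conv_lhs => rw [hww]
    simp [Finsupp.add_apply, Finset.sum_add_distrib, Finsupp.single_apply]
  have hwt_split : (∑ j : Fin (n₂ + 1), (j : ℕ) * w j)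
      = ∑ j : Fin (n₂ + 1), (j : ℕ) * w' j := by
    conv_lhs => rw [hww]
    simp [Finsupp.add_apply, Nat.mul_add, Finset.sum_add_distrib, Finsupp.single_apply,
      Finset.sum_ite_eq]
  set m' := w'.mapDomain Sum.inr with hm'
  have hgmem : gElt K n₁ n₂ 1 1 i ∈ RIdeal K n₁ n₂ 1 1 :=
    Ideal.subset_span ⟨⟨i, by omega⟩, rfl⟩
  have hexp : gElt K n₁ n₂ 1 1 i * monomial m' (1 : K)
      = ∑ i' : Fin (n₁ + 1), ∑ j' : Fin (n₂ + 1),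
          if (i' : ℕ) + (j' : ℕ) = i then
            monomial (Finsupp.single (Sum.inl i') 1 + Finsupp.single (Sum.inr j') 1 + m') (1 : K)
          else 0 := by
    unfold gElt
    rw [Finset.sum_mul]
    refine Finset.sum_congr rfl fun i' _ => ?_
    rw [Finset.sum_mul]
    refine Finset.sum_congr rfl fun j' _ => ?_
    split_ifs
    · rw [pow_one, pow_one, X, X, monomial_mul, monomial_mul, one_mul, one_mul]
    · rw [zero_mul]
  set T : MvPolynomial (Fin (n₁ + 1) ⊕ Fin (n₂ + 1)) K :=
    ∑ i' ∈ Finset.univ.erase (⟨i, hi⟩ : Fin (n₁ + 1)), ∑ j' : Fin (n₂ + 1),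
      if (i' : ℕ) + (j' : ℕ) = i then
        monomial (Finsupp.single (Sum.inl i') 1 + Finsupp.single (Sum.inr j') 1 + m') (1 : K)
      else 0 with hT
  have hdiag : (∑ j' : Fin (n₂ + 1),
        if ((⟨i, hi⟩ : Fin (n₁ + 1)) : ℕ) + (j' : ℕ) = i then
          monomial (Finsupp.single (Sum.inl (⟨i, hi⟩ : Fin (n₁ + 1))) 1 +
            Finsupp.single (Sum.inr j') 1 + m') (1 : K)
        else 0)
      = monomial (Finsupp.single (Sum.inl (⟨i, hi⟩ : Fin (n₁ + 1))) 1 +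
          Finsupp.single (Sum.inr (0 : Fin (n₂ + 1))) 1 + m') (1 : K) := by
    rw [Finset.sum_eq_single (0 : Fin (n₂ + 1))]
    · simp
    · intro j' _ hj'
      rw [if_neg]
      simp only [Fin.val_mk]
      intro hc
      have hj0 : (j' : ℕ) = 0 := by omega
      exact hj' (Fin.ext (by simp [hj0]))
    · intro h; exact absurd (Finset.mem_univ _) h
  have heq : gElt K n₁ n₂ 1 1 i * monomial m' (1 : K)
      = monomial (Finsupp.single (Sum.inl (⟨i, hi⟩ : Fin (n₁ + 1))) 1 +
          Finsupp.single (Sum.inr (0 : Fin (n₂ + 1))) 1 + m') (1 : K) + T := by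
    rw [hexp, ← Finset.add_sum_erase Finset.univ _
      (Finset.mem_univ (⟨i, hi⟩ : Fin (n₁ + 1))), hdiag, hT]
  have hvexp : Finsupp.single (Sum.inl (⟨i, hi⟩ : Fin (n₁ + 1))) 1 + w.mapDomain Sum.inr
      = Finsupp.single (Sum.inl (⟨i, hi⟩ : Fin (n₁ + 1))) 1 +
          Finsupp.single (Sum.inr (0 : Fin (n₂ + 1))) 1 + m' := by
    conv_lhs => rw [hww]
    rw [Finsupp.mapDomain_add, Finsupp.mapDomain_single, hm', add_assoc]
  have hTmem : T ∈ RIdeal K n₁ n₂ 1 1 := by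
    refine Ideal.sum_mem _ fun i' hi' => Ideal.sum_mem _ fun j' _ => ?_
    split_ifs with hcond
    · have hne : (i' : ℕ) ≠ i := fun hc => (Finset.mem_erase.mp hi').1 (Fin.ext hc)
      have hlt : (i' : ℕ) < i := by omega
      have hIH := IH (i' : ℕ) hlt i'.isLt (Finsupp.single j' 1 + w') ?_ ?_
      · have hexp2 : Finsupp.single (Sum.inl (⟨(i' : ℕ), i'.isLt⟩ : Fin (n₁ + 1))) 1 +
            (Finsupp.single j' 1 + w').mapDomain Sum.inr
            = Finsupp.single (Sum.inl i') 1 + Finsupp.single (Sum.inr j') 1 + m' := by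
          rw [Finsupp.mapDomain_add, Finsupp.mapDomain_single, hm', Fin.eta, add_assoc]
        rwa [hexp2] at hIH
      · have h1 : ∑ j : Fin (n₂ + 1), ((Finsupp.single j' 1 + w' : Fin (n₂ + 1) →₀ ℕ)) j
            = 1 + ∑ j, w' j := by
          simp [Finsupp.add_apply, Finset.sum_add_distrib, Finsupp.single_apply]
        omega
      · have h2 : ∑ j : Fin (n₂ + 1), (j : ℕ) * ((Finsupp.single j' 1 + w' : Fin (n₂ + 1) →₀ ℕ)) j
            = (j' : ℕ) + ∑ j : Fin (n₂ + 1), (j : ℕ) * w' j := by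
          simp [Finsupp.add_apply, Nat.mul_add, Finset.sum_add_distrib,
            Finsupp.single_apply, mul_ite, Finset.sum_ite_eq]
        omega
    · exact Ideal.zero_mem _
  have hfin : monomial (Finsupp.single (Sum.inl (⟨i, hi⟩ : Fin (n₁ + 1))) 1 +
        w.mapDomain Sum.inr) (1 : K)
      = gElt K n₁ n₂ 1 1 i * monomial m' (1 : K) - T := by
    rw [heq, hvexp]; ring
  rw [hfin]
  exact Ideal.sub_mem _ (Ideal.mul_mem_right _ _ hgmem) hTmem

/-- For `d = (1,1)`: every monomial of bidegree `(1, a₂)` and index weighted degree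
`k ≤ a₂ − 1` lies in `R(1)`. -/
theorem stmt_10 (K : Type*) [Field K] (n₁ n₂ : ℕ)
    (hn₁ : 1 ≤ n₁) (hn₂ : 1 ≤ n₂) (a₂ k : ℕ) (ha₂ : 1 ≤ a₂) (hk : k ≤ a₂ - 1)
    (v : (Fin (n₁ + 1) ⊕ Fin (n₂ + 1)) →₀ ℕ)
    (h1 : deg1 n₁ n₂ v = 1) (h2 : deg2 n₁ n₂ v = a₂) (hidx : idxDeg n₁ n₂ v = k) :
    monomial v (1 : K) ∈ RIdeal K n₁ n₂ 1 1 := by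

  obtain ⟨i₀, hi₀, hrest⟩ := sum_eq_one_nat (fun i : Fin (n₁ + 1) => v (Sum.inl i)) h1
  set w : Fin (n₂ + 1) →₀ ℕ := Finsupp.comapDomain Sum.inr v Sum.inr_injective.injOn with hw
  have hwj : ∀ j, w j = v (Sum.inr j) := fun j => rfl
  have hveq : v = Finsupp.single (Sum.inl i₀) 1 + w.mapDomain Sum.inr := by
    ext s
    cases s with
    | inl i =>
      rw [Finsupp.add_apply, Finsupp.mapDomain_notin_range _ _ (by simp), add_zero]
      rcases eq_or_ne i i₀ with h | h
      · subst h; simpa using hi₀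
      · rw [Finsupp.single_eq_of_ne' (by simpa using (Ne.symm h))]
        simpa using hrest i h
    | inr j =>
      rw [Finsupp.add_apply, Finsupp.mapDomain_apply Sum.inr_injective,
        Finsupp.single_eq_of_ne' (by simp), hwj, zero_add]
  have hsumw : ∑ j, w j = a₂ := by
    simpa [hwj, deg2] using h2
  have hxw : ∑ i : Fin (n₁ + 1), (i : ℕ) * v (Sum.inl i) = (i₀ : ℕ) := by
    rw [Finset.sum_eq_single i₀]
    · rw [hi₀, mul_one]
    · intro b _ hb; rw [hrest b hb, mul_zero]
    · intro h; exact absurd (Finset.mem_univ _) h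
  have hkey : (i₀ : ℕ) + (∑ j : Fin (n₂ + 1), (j : ℕ) * w j) + 1 ≤ a₂ := by
    have hidx' : (i₀ : ℕ) + ∑ j : Fin (n₂ + 1), (j : ℕ) * w j = k := by
      rw [← hidx]; unfold idxDeg; rw [hxw]
      simp [hwj]
    omega
  have := key K n₁ n₂ a₂ (i₀ : ℕ) i₀.isLt w hsumw hkey
  rw [hveq]
  simpa [Fin.eta] using this
end
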